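/- arXiv:1812.01853 — 6 statements merged into one kernel-verified Lean document; each statement's English description precedes it below -/
import Mathlib

section
/- Let ≺ be a transitive relation on a set T. If a size-change matrix A of dimension m × n abstracts the pair (s, t) ∈ T^m × T^n with respect to ≺, and a size-change matrix B of dimension n × p abstracts the pair (t, u) ∈ T^n × T^p with respect to ≺, then the product matrix A·B abstracts the pair (s, u) with respect to ≺. -/
/-- Entries of a size-change matrix: −1, 0 or ∞. -/
inductive SC : Type
  | minusOne
  | zero
  | infty
  deriving DecidableEq

/-- Composition of two entries: `∞` if one of them is `∞`, else `−1` if one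
of them is `−1`, else `0`. -/
def SC.comp : SC → SC → SC
  | .infty, _ => .infty
  | _, .infty => .infty
  | .minusOne, _ => .minusOne
  | _, .minusOne => .minusOne
  | _, _ => .zero

/-- Minimum of two entries for the order `−1 < 0 < ∞`. -/
def SC.min : SC → SC → SC
  | .minusOne, _ => .minusOne
  | _, .minusOne => .minusOne
  | .zero, _ => .zero
  | _, .zero => .zero
  | _, _ => .infty

/-- Product of an `m × n` size-change matrix with an `n × p` one (matrices are
encoded as total functions `ℕ → ℕ → SC`; only the entries below the dimensions
are relevant): `(A·B)_{ik} = min_{j < n} (A_{ij} ⊗ B_{jk})`. -/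
def matProd (n : ℕ) (A B : ℕ → ℕ → SC) : ℕ → ℕ → SC := fun i k =>
  ((List.range n).map fun j => (A i j).comp (B j k)).foldr SC.min SC.infty

/-- A size-change matrix `A` of dimension `m × n` abstracts the pair of tuples
`(s, t)` with respect to the relation `r`: `A_{ij} = −1` implies `r (t j) (s i)`
(i.e. `t j ≺ s i`) and `A_{ij} = 0` implies `t j = s i`. -/
def Abstracts {T : Type*} (r : T → T → Prop) (m n : ℕ)
    (A : ℕ → ℕ → SC) (s t : ℕ → T) : Prop :=
  ∀ i < m, ∀ j < n,
    (A i j = SC.minusOne → r (t j) (s i)) ∧ (A i j = SC.zero → t j = s i)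


lemma foldr_min_minusOne (l : List SC)
    (h : l.foldr SC.min SC.infty = SC.minusOne) : SC.minusOne ∈ l := by
  induction l with
  | nil => simp [List.foldr] at h
  | cons a l ih =>
    simp only [List.foldr] at h
    cases a <;> cases hl : l.foldr SC.min SC.infty
    all_goals simp_all [SC.min]

lemma foldr_min_zero (l : List SC)
    (h : l.foldr SC.min SC.infty = SC.zero) : SC.zero ∈ l := by
  induction l with
  | nil => simp [List.foldr] at h
  | cons a l ih =>
    simp only [List.foldr] at h
    cases a <;> cases hl : l.foldr SC.min SC.infty
    all_goals simp_all [SC.min]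

/-- If `A` abstracts `(s, t)` and `B` abstracts `(t, u)` with respect to a
transitive relation `≺`, then the product `A·B` abstracts `(s, u)`. -/
theorem matProd_abstracts {T : Type*} (r : T → T → Prop) (htrans : Transitive r)
    (m n p : ℕ) (A B : ℕ → ℕ → SC) (s t u : ℕ → T)
    (hA : Abstracts r m n A s t) (hB : Abstracts r n p B t u) :
    Abstracts r m p (matProd n A B) s u := by
  intro i hi k hk
  constructor
  · intro h
    obtain ⟨x, hx, hxe⟩ := List.mem_map.mp (foldr_min_minusOne _ h)
    have hj := List.mem_range.mp hx
    have hAij := hA i hi x hj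
    have hBjk := hB x hj k hk
    cases ha : A i x <;> cases hb : B x k <;> simp [ha, hb, SC.comp] at hxe
    · exact htrans (hBjk.1 hb) (hAij.1 ha)
    · rw [hBjk.2 hb]; exact hAij.1 ha
    · rw [← hAij.2 ha]; exact hBjk.1 hb
  · intro h
    obtain ⟨x, hx, hxe⟩ := List.mem_map.mp (foldr_min_zero _ h)
    have hj := List.mem_range.mp hx
    have hAij := hA i hi x hj
    have hBjk := hB x hj k hk
    cases ha : A i x <;> cases hb : B x k <;> simp [ha, hb, SC.comp] at hxe
    rw [hBjk.2 hb, hAij.2 ha]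
end

section
/- Let ≺ be a transitive well-founded relation on a set T and let m ∈ ℕ. There do not exist a sequence (M_k)_{k∈ℕ} of size-change matrices of dimension m × m and a sequence (v_k)_{k∈ℕ} of tuples v_k ∈ T^m such that: (1) for every k, M_k abstracts the pair (v_k, v_{k+1}) with respect to ≺, and (2) for all a ≤ b, the product M_a·M_{a+1}·…·M_b has at least one entry equal to −1 on its diagonal. -/
/-- `prodMats m M a len` is the product `M_a · M_{a+1} · … · M_{a+len}` of the
`m × m` size-change matrices `M_a, …, M_{a+len}`. -/
def prodMats (m : ℕ) (M : ℕ → (ℕ → ℕ → SC)) : ℕ → ℕ → (ℕ → ℕ → SC)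
  | a, 0 => M a
  | a, len + 1 => matProd m (M a) (prodMats m M (a + 1) len)

/-! ### Auxiliary lemmas about `SC` -/

lemma foldr_min_eq_minusOne {l : List SC} :
    l.foldr SC.min SC.infty = SC.minusOne ↔ SC.minusOne ∈ l := by
  induction l with
  | nil => simp [List.foldr]
  | cons a l ih =>
    simp only [List.foldr, List.mem_cons]
    cases a <;> cases h : l.foldr SC.min SC.infty <;> simp_all [SC.min]

lemma foldr_min_eq_zero {l : List SC} (h : l.foldr SC.min SC.infty = SC.zero) :
    SC.zero ∈ l := by
  induction l with
  | nil => simp [List.foldr] at h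
  | cons a l ih =>
    simp only [List.foldr] at h
    cases a <;> cases h' : l.foldr SC.min SC.infty <;> simp_all [SC.min]

lemma comp_eq_minusOne {x y : SC} (h : x.comp y = SC.minusOne) :
    (x = SC.minusOne ∧ y = SC.minusOne) ∨ (x = SC.minusOne ∧ y = SC.zero) ∨
    (x = SC.zero ∧ y = SC.minusOne) := by
  cases x <;> cases y <;> simp_all [SC.comp]

lemma comp_eq_zero {x y : SC} (h : x.comp y = SC.zero) :
    x = SC.zero ∧ y = SC.zero := by
  cases x <;> cases y <;> simp_all [SC.comp]

lemma matProd_eq_minusOne {m : ℕ} {A B : ℕ → ℕ → SC} {i k : ℕ}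
    (h : matProd m A B i k = SC.minusOne) :
    ∃ j < m, (A i j).comp (B j k) = SC.minusOne := by
  unfold matProd at h
  rw [foldr_min_eq_minusOne] at h
  obtain ⟨j, hj, hj'⟩ := List.mem_map.mp h
  exact ⟨j, List.mem_range.mp hj, hj'⟩

lemma matProd_eq_zero {m : ℕ} {A B : ℕ → ℕ → SC} {i k : ℕ}
    (h : matProd m A B i k = SC.zero) :
    ∃ j < m, (A i j).comp (B j k) = SC.zero := by
  unfold matProd at h
  obtain ⟨j, hj, hj'⟩ := List.mem_map.mp (foldr_min_eq_zero h)
  exact ⟨j, List.mem_range.mp hj, hj'⟩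

/-- Products of abstracting matrices abstract. -/
lemma prod_abstracts {T : Type*} {r : T → T → Prop} (htrans : Transitive r)
    {m : ℕ} {M : ℕ → (ℕ → ℕ → SC)} {v : ℕ → ℕ → T}
    (habs : ∀ k, Abstracts r m m (M k) (v k) (v (k + 1))) :
    ∀ len a, Abstracts r m m (prodMats m M a len) (v a) (v (a + len + 1)) := by
  intro len
  induction len with
  | zero => intro a; simpa [prodMats] using habs a
  | succ len ih =>
    intro a i hi j hj
    have key : prodMats m M a (len + 1) = matProd m (M a) (prodMats m M (a + 1) len) := rfl
    have ih' := ih (a + 1)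
    have harith : a + 1 + len + 1 = a + (len + 1) + 1 := by omega
    rw [harith] at ih'
    constructor
    · intro h
      rw [key] at h
      obtain ⟨j', hj', hc⟩ := matProd_eq_minusOne h
      rcases comp_eq_minusOne hc with ⟨h1, h2⟩ | ⟨h1, h2⟩ | ⟨h1, h2⟩
      · exact htrans ((ih' j' hj' j hj).1 h2) ((habs a i hi j' hj').1 h1)
      · have e := (ih' j' hj' j hj).2 h2
        exact e ▸ (habs a i hi j' hj').1 h1
      · have e := (habs a i hi j' hj').2 h1
        exact e ▸ (ih' j' hj' j hj).1 h2
    · intro h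
      rw [key] at h
      obtain ⟨j', hj', hc⟩ := matProd_eq_zero h
      obtain ⟨h1, h2⟩ := comp_eq_zero hc
      exact ((ih' j' hj' j hj).2 h2).trans ((habs a i hi j' hj').2 h1)

/-! ### A Ramsey-type lemma for consecutive pairs -/

lemma color_pigeon {m : ℕ} {c : ℕ → ℕ → ℕ} (hc : ∀ a b, c a b < m)
    {S : Set ℕ} (hS : S.Infinite) (a : ℕ) :
    ∃ i, {b ∈ S | a < b ∧ c a b = i}.Infinite := by
  by_contra h
  push_neg at h
  have hfin : ∀ i, {b ∈ S | a < b ∧ c a b = i}.Finite := fun i =>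
    h i
  have hsub : {b ∈ S | a < b} ⊆ ⋃ i ∈ Finset.range m, {b ∈ S | a < b ∧ c a b = i} := by
    intro b hb
    simp only [Set.mem_iUnion, Finset.mem_range, Set.mem_setOf_eq]
    exact ⟨c a b, hc a b, hb.1, hb.2, rfl⟩
  have h1 : {b ∈ S | a < b}.Finite :=
    (Set.Finite.biUnion (Finset.range m).finite_toSet (fun i _ => hfin i)).subset hsub
  have h2 : S ⊆ {b ∈ S | a < b} ∪ Set.Iic a := by
    intro b hb
    by_cases hab : a < b
    · exact Or.inl ⟨hb, hab⟩
    · exact Or.inr (Set.mem_Iic.mpr (by omega))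
  exact hS ((h1.union (Set.finite_Iic a)).subset h2)

open Classical in
/-- One step of the Ramsey construction. -/
noncomputable def rstep (c : ℕ → ℕ → ℕ) (p : ℕ × Set ℕ) : ℕ × Set ℕ :=
  let a := sInf p.2
  if h : ∃ i, {b ∈ p.2 | a < b ∧ c a b = i}.Infinite then
    (a, {b ∈ p.2 | a < b ∧ c a b = h.choose})
  else (a, ∅)

noncomputable def rseq (c : ℕ → ℕ → ℕ) : ℕ → ℕ × Set ℕ
  | 0 => rstep c (0, Set.univ)
  | n + 1 => rstep c (rseq c (n))

lemma rstep_spec {m : ℕ} {c : ℕ → ℕ → ℕ} (hc : ∀ a b, c a b < m)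
    {S : Set ℕ} (hS : S.Infinite) :
    (rstep c (0, S)).2.Infinite ∧
    (∀ b ∈ (rstep c (0, S)).2, (rstep c (0, S)).1 < b) ∧
    (∀ b ∈ (rstep c (0, S)).2, ∀ b' ∈ (rstep c (0, S)).2,
        c (rstep c (0, S)).1 b = c (rstep c (0, S)).1 b') ∧
    (rstep c (0, S)).2 ⊆ S ∧ (rstep c (0, S)).1 ∈ S := by
  classical
  unfold rstep
  simp only
  have hex : ∃ i, {b ∈ S | sInf S < b ∧ c (sInf S) b = i}.Infinite :=
    color_pigeon hc hS (sInf S)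
  rw [dif_pos hex]
  refine ⟨hex.choose_spec, ?_, ?_, ?_, ?_⟩
  · intro b hb; exact hb.2.1
  · intro b hb b' hb'; rw [hb.2.2, hb'.2.2]
  · intro b hb; exact hb.1
  · exact Nat.sInf_mem (Set.Infinite.nonempty hS)

lemma rstep_fst (c : ℕ → ℕ → ℕ) (a : ℕ) (S : Set ℕ) :
    rstep c (a, S) = rstep c (0, S) := by
  unfold rstep; simp

lemma rseq_spec {m : ℕ} {c : ℕ → ℕ → ℕ} (hc : ∀ a b, c a b < m) : ∀ n,
    (rseq c n).2.Infinite ∧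
    (∀ b ∈ (rseq c n).2, (rseq c n).1 < b) ∧
    (∀ b ∈ (rseq c n).2, ∀ b' ∈ (rseq c n).2,
        c (rseq c n).1 b = c (rseq c n).1 b') := by
  intro n
  induction n with
  | zero =>
    have h := rstep_spec hc (S := Set.univ) Set.infinite_univ
    exact ⟨h.1, h.2.1, h.2.2.1⟩
  | succ n ih =>
    have key : rseq c (n + 1) = rstep c (0, (rseq c n).2) := by
      show rstep c (rseq c n) = _
      rw [← rstep_fst c (rseq c n).1 (rseq c n).2]
    have h := rstep_spec hc ih.1
    rw [key]
    exact ⟨h.1, h.2.1, h.2.2.1⟩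

lemma rseq_next_mem {m : ℕ} {c : ℕ → ℕ → ℕ} (hc : ∀ a b, c a b < m) (n : ℕ) :
    (rseq c (n + 1)).1 ∈ (rseq c n).2 ∧ (rseq c (n + 1)).2 ⊆ (rseq c n).2 := by
  have key : rseq c (n + 1) = rstep c (0, (rseq c n).2) := by
    show rstep c (rseq c n) = _
    rw [← rstep_fst c (rseq c n).1 (rseq c n).2]
  have h := rstep_spec hc (rseq_spec hc n).1
  rw [key]
  exact ⟨h.2.2.2.2, h.2.2.2.1⟩

/-- The Ramsey-type lemma: for any coloring of pairs with `m` colors there is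
a strictly monotone sequence along which consecutive pairs all get the same
color. -/
lemma exists_mono_subseq {m : ℕ} (c : ℕ → ℕ → ℕ) (hc : ∀ a b, c a b < m) :
    ∃ i g, StrictMono g ∧ ∀ k, c (g k) (g (k + 1)) = i := by
  classical
  set a : ℕ → ℕ := fun n => (rseq c n).1 with ha
  set S : ℕ → Set ℕ := fun n => (rseq c n).2 with hS
  -- S is decreasing, a (n+1) ∈ S n
  have hmem : ∀ n, a (n + 1) ∈ S n := fun n => (rseq_next_mem hc n).1
  have hsub : ∀ n, S (n + 1) ⊆ S n := fun n => (rseq_next_mem hc n).2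
  have hsub' : ∀ k l, k ≤ l → S l ⊆ S k := by
    intro k l hkl
    induction l with
    | zero => have : k = 0 := by omega
              subst this; exact fun _ h => h
    | succ l ih =>
      rcases Nat.lt_or_ge k (l + 1) with h | h
      · exact fun x hx => ih (by omega) (hsub l hx)
      · have : k = l + 1 := by omega
        subst this; exact fun _ h => h
  have hmem' : ∀ k l, k < l → a l ∈ S k := by
    intro k l hkl
    rcases Nat.exists_eq_add_of_lt hkl with ⟨d, rfl⟩
    exact hsub' k (k + d) (by omega) (hmem (k + d))
  -- a is strictly monotone
  have hlt : ∀ n, a n < a (n + 1) := fun n => (rseq_spec hc n).2.1 _ (hmem n)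
  have hamono : StrictMono a := strictMono_nat_of_lt_succ hlt
  -- constant color on S n
  have hconst : ∀ k l, k < l → c (a k) (a l) = c (a k) (a (k + 1)) := by
    intro k l hkl
    exact (rseq_spec hc k).2.2 _ (hmem' k l hkl) _ (hmem k)
  -- pigeonhole on D k := c (a k) (a (k+1))
  set D : ℕ → ℕ := fun k => c (a k) (a (k + 1)) with hD
  have hm : 0 < m := lt_of_le_of_lt (Nat.zero_le _) (hc 0 0)
  have hpig : ∃ i, {k | D k = i}.Infinite := by
    by_contra h
    push_neg at h
    have hfin : ∀ i, {k | D k = i}.Finite := fun i => h i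
    have : (Set.univ : Set ℕ) ⊆ ⋃ i ∈ Finset.range m, {k | D k = i} := by
      intro k _
      simp only [Set.mem_iUnion, Finset.mem_range, Set.mem_setOf_eq]
      exact ⟨D k, hc _ _, rfl⟩
    exact Set.infinite_univ
      (((Set.Finite.biUnion (Finset.range m).finite_toSet fun i _ => hfin i).subset this))
  obtain ⟨i, hi⟩ := hpig
  refine ⟨i, fun j => a (Nat.nth (fun k => D k = i) j), ?_, ?_⟩
  · exact hamono.comp (Nat.nth_strictMono hi)
  · intro j
    have h1 : Nat.nth (fun k => D k = i) j < Nat.nth (fun k => D k = i) (j + 1) :=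
      Nat.nth_strictMono hi (by omega)
    rw [hconst _ _ h1]
    exact Nat.nth_mem_of_infinite hi j

/-! ### Main theorem -/

/-- If `≺` is a transitive well-founded relation on `T`, there is no sequence
of `m × m` size-change matrices `(M_k)` and of tuples `(v_k)` in `T^m` such
that each `M_k` abstracts `(v_k, v_{k+1})` and every product
`M_a · … · M_b` (for `a ≤ b`) has a `−1` somewhere on its diagonal. -/
theorem no_infinite_sc_abstracted_sequence {T : Type*} (r : T → T → Prop)
    (htrans : Transitive r) (hwf : WellFounded r) (m : ℕ) :
    ¬ ∃ (M : ℕ → (ℕ → ℕ → SC)) (v : ℕ → ℕ → T),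
        (∀ k, Abstracts r m m (M k) (v k) (v (k + 1))) ∧
        (∀ a b, a ≤ b → ∃ i < m, (prodMats m M a (b - a)) i i = SC.minusOne) := by
  classical
  rintro ⟨M, v, habs, hdiag⟩
  have hm : 0 < m := by
    obtain ⟨i, hi, _⟩ := hdiag 0 0 le_rfl
    omega
  -- descents
  have hdesc : ∀ a b, a < b → ∃ i < m, r (v b i) (v a i) := by
    intro a b hab
    obtain ⟨i, hi, hM⟩ := hdiag a (b - 1) (by omega)
    refine ⟨i, hi, ?_⟩
    have := (prod_abstracts htrans habs (b - 1 - a) a i hi i hi).1 hM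
    have harith : a + (b - 1 - a) + 1 = b := by omega
    rwa [harith] at this
  -- coloring
  set c : ℕ → ℕ → ℕ := fun a b =>
    if h : a < b then (hdesc a b h).choose else 0 with hcdef
  have hc : ∀ a b, c a b < m := by
    intro a b
    by_cases h : a < b
    · simp only [hcdef, dif_pos h]
      exact (hdesc a b h).choose_spec.1
    · simp only [hcdef, dif_neg h]; exact hm
  have hcr : ∀ a b (h : a < b), r (v b (c a b)) (v a (c a b)) := by
    intro a b h
    simp only [hcdef, dif_pos h]
    exact (hdesc a b h).choose_spec.2
  obtain ⟨i, g, hg, hgi⟩ := exists_mono_subseq c hc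
  have hchain : ∀ k, r (v (g (k + 1)) i) (v (g k) i) := by
    intro k
    have := hcr (g k) (g (k + 1)) (hg (by omega))
    rwa [hgi k] at this
  obtain ⟨t, ⟨k, rfl⟩, hmin⟩ :=
    hwf.has_min (Set.range fun k => v (g k) i) ⟨_, 0, rfl⟩
  exact hmin _ ⟨k + 1, rfl⟩ (hchain k)
end

section
/- Let f p₁ … p_m → r be a rewrite rule over first-order terms whose left-hand side arguments p₁,…,p_m are patterns, let g u₁ … u_n be a subterm of r, and let A be the associated call matrix, i.e. the m × n matrix over {−1, 0, ∞} with A_{ij} = −1 if u_j ⊲ p_i, A_{ij} = 0 if u_j = p_i, and A_{ij} = ∞ otherwise. Then for every substitution γ (a map from variables to terms, extended homomorphically to terms), the matrix A abstracts the pair ((p₁γ,…,p_mγ), (u₁γ,…,u_nγ)) with respect to ⊲; that is, A_{ij} = −1 implies u_jγ ⊲ p_iγ, and A_{ij} = 0 implies u_jγ = p_iγ. -/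
/-- First-order terms over a signature `Sig` with arity function `ar`:
a term is either a variable (from the countably infinite set `ℕ`) or a
symbol applied to as many terms as its arity. -/
inductive Term (Sig : Type) (ar : Sig → ℕ) : Type
  | var : ℕ → Term Sig ar
  | app : (f : Sig) → (Fin (ar f) → Term Sig ar) → Term Sig ar

/-- Patterns: terms built only from variables and fully applied constructors
(`isCon c` meaning that the symbol `c` is a constructor). -/
inductive Pattern {Sig : Type} {ar : Sig → ℕ} (isCon : Sig → Prop) :
    Term Sig ar → Prop
  | var (x : ℕ) : Pattern isCon (Term.var x)
  | con (c : Sig) (hc : isCon c) (ts : Fin (ar c) → Term Sig ar) :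
      (∀ i, Pattern isCon (ts i)) → Pattern isCon (Term.app c ts)

/-- The strict constructor subterm relation `⊲`: the smallest transitive
relation such that `t_i ⊲ c t₁ … t_n` for every constructor `c`. -/
inductive CSub {Sig : Type} {ar : Sig → ℕ} (isCon : Sig → Prop) :
    Term Sig ar → Term Sig ar → Prop
  | arg (c : Sig) (hc : isCon c) (ts : Fin (ar c) → Term Sig ar) (i : Fin (ar c)) :
      CSub isCon (ts i) (Term.app c ts)
  | trans {a b c : Term Sig ar} :
      CSub isCon a b → CSub isCon b c → CSub isCon a c

/-- Application of a substitution (a map from variables to terms), extended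
homomorphically to terms. -/
def subst {Sig : Type} {ar : Sig → ℕ} (γ : ℕ → Term Sig ar) :
    Term Sig ar → Term Sig ar
  | .var x => γ x
  | .app f ts => .app f (fun i => subst γ (ts i))

/-- Direct (one-step) subterm: `t_i` is a direct subterm of `f t₁ … t_n`. -/
inductive DirectSub {Sig : Type} {ar : Sig → ℕ} : Term Sig ar → Term Sig ar → Prop
  | arg (f : Sig) (ts : Fin (ar f) → Term Sig ar) (i : Fin (ar f)) :
      DirectSub (ts i) (Term.app f ts)

/-- `SubtermOf s t`: `s` is a (not necessarily strict) subterm of `t`. -/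
def SubtermOf {Sig : Type} {ar : Sig → ℕ} : Term Sig ar → Term Sig ar → Prop :=
  Relation.ReflTransGen DirectSub

/-- For a rewrite rule `f p₁ … p_m → r` with pattern arguments and a subterm
`g u₁ … u_n` of `r`, the associated call matrix `A` (with `A_{ij} = −1` if
`u_j ⊲ p_i`, `A_{ij} = 0` if `u_j = p_i`, and `A_{ij} = ∞` otherwise)
abstracts `((p₁γ, …, p_mγ), (u₁γ, …, u_nγ))` with respect to the strict
constructor subterm relation `⊲`, for every substitution `γ`. -/
theorem callMatrix_abstracts_instances {Sig : Type} (ar : Sig → ℕ)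
    (isCon : Sig → Prop) (m n : ℕ) (f g : Sig) (hf : ar f = m) (hg : ar g = n)
    (p u : ℕ → Term Sig ar) (rhs : Term Sig ar)
    (hp : ∀ i < m, Pattern isCon (p i))
    (hu : SubtermOf (Term.app g fun j => u j.val) rhs)
    (A : ℕ → ℕ → SC)
    (hA : ∀ i < m, ∀ j < n,
      (CSub isCon (u j) (p i) → A i j = SC.minusOne) ∧
      (¬ CSub isCon (u j) (p i) → u j = p i → A i j = SC.zero) ∧
      (¬ CSub isCon (u j) (p i) → u j ≠ p i → A i j = SC.infty)) :
    ∀ γ : ℕ → Term Sig ar,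
      Abstracts (CSub isCon) m n A
        (fun i => subst γ (p i)) (fun j => subst γ (u j)) := by
  have subCSub : ∀ {a b : Term Sig ar} (γ : ℕ → Term Sig ar),
      CSub isCon a b → CSub isCon (subst γ a) (subst γ b) := by
    intro a b γ h
    induction h with
    | arg c hc ts i => exact CSub.arg c hc (fun i => subst γ (ts i)) i
    | trans h1 h2 ih1 ih2 => exact CSub.trans ih1 ih2
  intro γ i hi j hj
  obtain ⟨h1, h2, h3⟩ := hA i hi j hj
  constructor
  · intro hA1
    by_cases hc : CSub isCon (u j) (p i)
    · exact subCSub γ hc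
    · by_cases he : u j = p i
      · simp [h2 hc he] at hA1
      · simp [h3 hc he] at hA1
  · intro hA0
    by_cases hc : CSub isCon (u j) (p i)
    · simp [h1 hc] at hA0
    · by_cases he : u j = p i
      · simp only []; rw [he]
      · simp [h3 hc he] at hA0
end

section
/- Let → be a binary relation on first-order terms over a signature Σ that is closed under contexts, i.e. if t → t′ then f t₁ … t_{i−1} t t_{i+1} … t_n → f t₁ … t_{i−1} t′ t_{i+1} … t_n for every symbol f of arity n and every position i. Let SN denote the set of terms that are strongly normalizing for → (i.e. accessible for the inverse of →), and let ⊲ denote the strict subterm relation. Then the relation R defined by s R t iff (t → s or s ⊲ t) is well-founded on SN; in particular every strongly normalizing term is accessible for R. -/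
/-- The strict subterm relation `⊲`: the smallest transitive relation such
that `t_i ⊲ f t₁ … t_n` for every symbol `f` of arity `n`. -/
inductive Subterm {Sig : Type} {ar : Sig → ℕ} : Term Sig ar → Term Sig ar → Prop
  | arg (f : Sig) (ts : Fin (ar f) → Term Sig ar) (i : Fin (ar f)) :
      Subterm (ts i) (Term.app f ts)
  | trans {a b c : Term Sig ar} : Subterm a b → Subterm b c → Subterm a c

lemma subterm_not_var {Sig : Type} {ar : Sig → ℕ} {u t : Term Sig ar}
    (h : Subterm u t) : ∀ n, t = Term.var n → False := by
  induction h with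
  | arg f ts i => intro n hn; cases hn
  | trans hab hbc ihab ihbc => exact ihbc

lemma subterm_app_elim {Sig : Type} {ar : Sig → ℕ} {u t : Term Sig ar}
    (h : Subterm u t) : ∀ (f : Sig) (ts : Fin (ar f) → Term Sig ar),
      t = Term.app f ts → ∃ i, u = ts i ∨ Subterm u (ts i) := by
  induction h with
  | arg f ts i =>
    intro g us heq
    obtain ⟨rfl, h2⟩ := Term.app.inj heq
    exact ⟨i, Or.inl (congrFun (eq_of_heq h2) i)⟩
  | trans hab hbc ihab ihbc =>
    intro g us heq
    obtain ⟨i, hi⟩ := ihbc g us heq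
    rcases hi with rfl | hi
    · exact ⟨i, Or.inr hab⟩
    · exact ⟨i, Or.inr (hab.trans hi)⟩

lemma subterm_lift {Sig : Type} {ar : Sig → ℕ}
    {rw : Term Sig ar → Term Sig ar → Prop}
    (hctx : ∀ t t', rw t t' →
      ∀ (f : Sig) (ts : Fin (ar f) → Term Sig ar) (i : Fin (ar f)),
        rw (Term.app f (Function.update ts i t))
           (Term.app f (Function.update ts i t')))
    {s t : Term Sig ar} (hst : Subterm s t) :
    ∀ u, rw s u → ∃ t', rw t t' ∧ Subterm u t' := by
  induction hst with
  | arg f ts i =>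
    intro u hu
    refine ⟨Term.app f (Function.update ts i u), ?_, ?_⟩
    · have := hctx (ts i) u hu f ts i
      rwa [Function.update_eq_self] at this
    · have := Subterm.arg f (Function.update ts i u) i
      simpa using this
  | trans hab hbc ihab ihbc =>
    intro u hu
    obtain ⟨b', hb', hub'⟩ := ihab u hu
    obtain ⟨t', ht', hbt'⟩ := ihbc b' hb'
    exact ⟨t', ht', hub'.trans hbt'⟩

/-- If `→` is a binary relation on first-order terms closed under contexts,
then the relation `R` defined by `s R t` iff (`t → s` or `s ⊲ t`) is
well-founded on the set of strongly normalizing terms: every term that is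
accessible for the inverse of `→` (i.e. strongly normalizing) is accessible
for `R`. -/
theorem sn_acc_rew_union_subterm {Sig : Type} (ar : Sig → ℕ)
    (rw : Term Sig ar → Term Sig ar → Prop)
    (hctx : ∀ t t', rw t t' →
      ∀ (f : Sig) (ts : Fin (ar f) → Term Sig ar) (i : Fin (ar f)),
        rw (Term.app f (Function.update ts i t))
           (Term.app f (Function.update ts i t'))) :
    ∀ t : Term Sig ar, Acc (fun a b => rw b a) t →
      Acc (fun s t => rw t s ∨ Subterm s t) t := by
  suffices h : ∀ t : Term Sig ar, Acc (fun a b => rw b a) t →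
      ∀ s, s = t ∨ Subterm s t → Acc (fun s t => rw t s ∨ Subterm s t) s by
    intro t ht; exact h t ht t (Or.inl rfl)
  intro t ht
  induction ht with
  | intro t _ ih =>
    intro s
    induction s with
    | var n =>
      intro hs
      constructor
      intro u hu
      rcases hu with hrw | hsub
      · rcases hs with rfl | hst
        · exact ih u hrw u (Or.inl rfl)
        · obtain ⟨t', ht', hu'⟩ := subterm_lift hctx hst u hrw
          exact ih t' ht' u (Or.inr hu')
      · exact absurd rfl (subterm_not_var hsub n)
    | app f ss ihs =>
      intro hs
      constructor
      intro u hu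
      rcases hu with hrw | hsub
      · rcases hs with rfl | hst
        · exact ih u hrw u (Or.inl rfl)
        · obtain ⟨t', ht', hu'⟩ := subterm_lift hctx hst u hrw
          exact ih t' ht' u (Or.inr hu')
      · obtain ⟨i, hi⟩ := subterm_app_elim hsub f ss rfl
        have hit : ss i = t ∨ Subterm (ss i) t := by
          rcases hs with rfl | hst
          · exact Or.inr (Subterm.arg f ss i)
          · exact Or.inr ((Subterm.arg f ss i).trans hst)
        have acci := ihs i hit
        rcases hi with rfl | hi
        · exact acci
        · exact acci.inv (Or.inr hi)
end

section
/- Let R be a first-order constructor rewrite system, i.e. a set of rules f p₁ … p_{ar(f)} → r where f is a defined symbol and the p_i are patterns. Define the formal call relation: f p̄ >_call g ū if there is a rule f p̄ → r in R, g is a defined symbol, and g ū is a subterm of r with |ū| = ar(g); to each formal call associate the call matrix (a_{ij}) with a_{ij} = −1 if u_j ⊲ p_i, a_{ij} = 0 if u_j = p_i, and a_{ij} = ∞ otherwise. Let → be the rewrite relation generated by R (closure of the rules under substitutions and contexts). Define the instantiated call relation ⋗: f t̄ ⋗ g v̄ iff there exist a formal call f p̄ >_call g ū and a substitution γ such that every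 t_i is strongly normalizing for →, t_i →* p_iγ for every i, and v_j = u_jγ for every j. If R satisfies the size-change termination principle — i.e. in the transitive closure of the call graph built from the call matrices (multiplied with the min-⊗ product on {−1,0,∞}), every matrix labeling an edge from a node to itself has at least one −1 on its diagonal — then the relation ⋗ is well-founded. -/
/-- An edge of a call graph on the set of symbols `F`: a source symbol, a
target symbol, and a size-change matrix (of dimension `ar src × ar tgt`). -/
structure Edge (F : Type*) : Type _ where
  src : F
  tgt : F
  mat : ℕ → ℕ → SC

/-- The transitive closure `G⁺` of a call graph `G`: `Closure ar G f g M` holds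
iff there is a nonempty path `e₁, …, e_k` in `G` from `f` to `g` whose product
of labels `A(e₁)·…·A(e_k)` is `M`. -/
inductive Closure {F : Type*} (ar : F → ℕ) (G : Set (Edge F)) :
    F → F → (ℕ → ℕ → SC) → Prop
  | base {e : Edge F} : e ∈ G → Closure ar G e.src e.tgt e.mat
  | step {e : Edge F} {g : F} {M : ℕ → ℕ → SC} :
      e ∈ G → Closure ar G e.tgt g M →
      Closure ar G e.src g (matProd (ar e.tgt) e.mat M)

/-- The rewrite relation generated by a set `R` of rules (pairs
left-hand side / right-hand side): closure of the rules under substitutions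
and under contexts. -/
inductive Rew {Sig : Type} {ar : Sig → ℕ} (R : Set (Term Sig ar × Term Sig ar)) :
    Term Sig ar → Term Sig ar → Prop
  | rule {l r : Term Sig ar} (h : (l, r) ∈ R) (γ : ℕ → Term Sig ar) :
      Rew R (subst γ l) (subst γ r)
  | ctx {t t' : Term Sig ar} (h : Rew R t t')
      (f : Sig) (ts : Fin (ar f) → Term Sig ar) (i : Fin (ar f)) :
      Rew R (Term.app f (Function.update ts i t))
            (Term.app f (Function.update ts i t'))

/-- `A` is the call matrix of the formal call `f p̄ >call g ū`:
`A_{ij} = −1` if `u_j ⊲ p_i`, `A_{ij} = 0` if `u_j = p_i` (and `u_j` is not a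
strict constructor subterm of `p_i`), and `A_{ij} = ∞` otherwise. -/
def IsCallMatrix {Sig : Type} (ar : Sig → ℕ) (isCon : Sig → Prop) (f g : Sig)
    (ps : Fin (ar f) → Term Sig ar) (us : Fin (ar g) → Term Sig ar)
    (A : ℕ → ℕ → SC) : Prop :=
  ∀ (i : Fin (ar f)) (j : Fin (ar g)),
    (CSub isCon (us j) (ps i) → A i j = SC.minusOne) ∧
    (¬ CSub isCon (us j) (ps i) → us j = ps i → A i j = SC.zero) ∧
    (¬ CSub isCon (us j) (ps i) → us j ≠ ps i → A i j = SC.infty)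

/-- The call graph of a rewrite system `R`: for every formal call
`f p̄ >call g ū` — i.e. every rule `f p̄ → r` of `R` and subterm `g ū` of `r`
with `g` a defined symbol — an edge from `f` to `g` labeled with the
corresponding call matrix. -/
def CallGraph {Sig : Type} (ar : Sig → ℕ) (isCon : Sig → Prop)
    (R : Set (Term Sig ar × Term Sig ar)) : Set (Edge Sig) :=
  { e | ∃ (ps : Fin (ar e.src) → Term Sig ar)
          (us : Fin (ar e.tgt) → Term Sig ar) (r : Term Sig ar),
      (Term.app e.src ps, r) ∈ R ∧ ¬ isCon e.tgt ∧
      SubtermOf (Term.app e.tgt us) r ∧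
      IsCallMatrix ar isCon e.src e.tgt ps us e.mat }

/-- The instantiated call relation `⋗` on pairs of a symbol `f` and a tuple of
`ar f` arguments: `f t̄ ⋗ g v̄` iff there are a formal call `f p̄ >call g ū`
(a rule `f p̄ → r` in `R` and a subterm `g ū` of `r` with `g` defined) and a
substitution `γ` such that every `t_i` is strongly normalizing for the rewrite
relation, `t_i →* p_iγ` for every `i`, and `v_j = u_jγ` for every `j`. -/
def ICall {Sig : Type} (ar : Sig → ℕ) (isCon : Sig → Prop)
    (R : Set (Term Sig ar × Term Sig ar)) :
    ((f : Sig) × (Fin (ar f) → Term Sig ar)) →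
    ((g : Sig) × (Fin (ar g) → Term Sig ar)) → Prop :=
  fun x y =>
    ∃ (ps : Fin (ar x.1) → Term Sig ar) (us : Fin (ar y.1) → Term Sig ar)
      (r : Term Sig ar) (γ : ℕ → Term Sig ar),
      (Term.app x.1 ps, r) ∈ R ∧ ¬ isCon y.1 ∧
      SubtermOf (Term.app y.1 us) r ∧
      (∀ i, Acc (fun a b => Rew R b a) (x.2 i)) ∧
      (∀ i, Relation.ReflTransGen (Rew R) (x.2 i) (subst γ (ps i))) ∧
      (∀ j, y.2 j = subst γ (us j))

/-! ### Auxiliary material for the proof -/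

section Aux

instance : Fintype SC :=
  ⟨⟨{SC.minusOne, SC.zero, SC.infty}, by decide⟩, fun x => by cases x <;> decide⟩

theorem min_eq_minusOne {a b : SC} (h : SC.min a b = SC.minusOne) :
    a = SC.minusOne ∨ b = SC.minusOne := by
  revert h; cases a <;> cases b <;> decide

theorem sc_min_eq_zero {a b : SC} (h : SC.min a b = SC.zero) :
    a = SC.zero ∨ b = SC.zero := by
  revert h; cases a <;> cases b <;> decide

theorem foldr_min_minusOne_s7 : ∀ {L : List SC},
    L.foldr SC.min SC.infty = SC.minusOne → SC.minusOne ∈ L := by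
  intro L
  induction L with
  | nil => intro h; exact absurd h (by decide)
  | cons a L ih =>
    intro h
    rw [List.foldr_cons] at h
    rcases min_eq_minusOne h with h | h
    · rw [← h]; exact List.mem_cons_self
    · exact List.mem_cons_of_mem _ (ih h)

theorem foldr_min_zero_s7 : ∀ {L : List SC},
    L.foldr SC.min SC.infty = SC.zero → SC.zero ∈ L := by
  intro L
  induction L with
  | nil => intro h; exact absurd h (by decide)
  | cons a L ih =>
    intro h
    rw [List.foldr_cons] at h
    rcases sc_min_eq_zero h with h | h
    · rw [← h]; exact List.mem_cons_self
    · exact List.mem_cons_of_mem _ (ih h)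

theorem matProd_minusOne {n : ℕ} {A B : ℕ → ℕ → SC} {i k : ℕ}
    (h : matProd n A B i k = SC.minusOne) :
    ∃ j, j < n ∧ (A i j).comp (B j k) = SC.minusOne := by
  simp only [matProd] at h
  obtain ⟨j, hj, hval⟩ := List.mem_map.mp (foldr_min_minusOne_s7 h)
  exact ⟨j, List.mem_range.mp hj, hval⟩

theorem matProd_zero {n : ℕ} {A B : ℕ → ℕ → SC} {i k : ℕ}
    (h : matProd n A B i k = SC.zero) :
    ∃ j, j < n ∧ (A i j).comp (B j k) = SC.zero := by
  simp only [matProd] at h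
  obtain ⟨j, hj, hval⟩ := List.mem_map.mp (foldr_min_zero_s7 h)
  exact ⟨j, List.mem_range.mp hj, hval⟩

variable {Sig : Type} {ar : Sig → ℕ} {isCon : Sig → Prop}
  {R : Set (Term Sig ar × Term Sig ar)}

/-- Substitutions preserve the strict constructor subterm relation. -/
theorem csub_subst {γ : ℕ → Term Sig ar} {a b : Term Sig ar}
    (h : CSub isCon a b) : CSub isCon (subst γ a) (subst γ b) := by
  induction h with
  | arg c hc ts i => exact CSub.arg c hc (fun i => subst γ (ts i)) i
  | trans h1 h2 ih1 ih2 => exact ih1.trans ih2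

/-- One-step commutation of rewriting with the constructor subterm relation. -/
theorem csub_rew {v w : Term Sig ar} (h : CSub isCon v w) :
    ∀ {v'}, Rew R v v' → ∃ w', Rew R w w' ∧ CSub isCon v' w' := by
  induction h with
  | arg c hc ts i =>
    intro v' hr
    refine ⟨Term.app c (Function.update ts i v'), ?_, ?_⟩
    · have h2 := Rew.ctx hr c ts i
      rwa [Function.update_eq_self] at h2
    · have h3 := CSub.arg c hc (Function.update ts i v') i
      rwa [Function.update_self] at h3
  | trans h1 h2 ih1 ih2 =>
    intro v' hr
    obtain ⟨b', hb', hcb⟩ := ih1 hr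
    obtain ⟨w', hw', hcw⟩ := ih2 hb'
    exact ⟨w', hw', hcb.trans hcw⟩

/-- Multi-step commutation of rewriting with the constructor subterm
relation. -/
theorem csub_red {v w u : Term Sig ar} (hc : CSub isCon v w)
    (hr : Relation.ReflTransGen (Rew R) v u) :
    ∃ w', Relation.ReflTransGen (Rew R) w w' ∧ CSub isCon u w' := by
  induction hr with
  | refl => exact ⟨w, Relation.ReflTransGen.refl, hc⟩
  | tail h1 h2 ih =>
    obtain ⟨w', hw', hcw⟩ := ih
    obtain ⟨w'', hw'', hcw''⟩ := csub_rew hcw h2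
    exact ⟨w'', hw'.trans (Relation.ReflTransGen.single hw''), hcw''⟩

/-- The "decrease" relation: `v` is a strict constructor subterm of some
reduct of `t`. -/
def DecR (isCon : Sig → Prop) (R : Set (Term Sig ar × Term Sig ar))
    (v t : Term Sig ar) : Prop :=
  ∃ w, Relation.ReflTransGen (Rew R) t w ∧ CSub isCon v w

theorem red_dec {t t' v : Term Sig ar}
    (h1 : Relation.ReflTransGen (Rew R) t t') (h2 : DecR isCon R v t') :
    DecR isCon R v t := by
  obtain ⟨w, hw, hc⟩ := h2
  exact ⟨w, h1.trans hw, hc⟩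

theorem dec_red {t v u : Term Sig ar} (h1 : DecR isCon R v t)
    (h2 : Relation.ReflTransGen (Rew R) v u) : DecR isCon R u t := by
  obtain ⟨w, hw, hc⟩ := h1
  obtain ⟨w', hw', hc'⟩ := csub_red hc h2
  exact ⟨w', hw.trans hw', hc'⟩

theorem dec_dec {t v u : Term Sig ar} (h1 : DecR isCon R v t)
    (h2 : DecR isCon R u v) : DecR isCon R u t := by
  obtain ⟨w, hw, hc⟩ := h1
  obtain ⟨w2, hw2, hc2⟩ := h2
  obtain ⟨w', hw', hc'⟩ := csub_red hc hw2
  exact ⟨w', hw.trans hw', hc2.trans hc'⟩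

/-- Accessibility of the union of two relations, given a commutation
property and global accessibility of the second one. -/
theorem acc_union_aux {α : Sort*} {r1 r2 : α → α → Prop}
    (comm : ∀ {t v v'}, r2 v t → r1 v' v → ∃ t', r1 t' t ∧ r2 v' t')
    {u : α} (hu : Acc r2 u) :
    (∀ u', r1 u' u → Acc (fun v t => r1 v t ∨ r2 v t) u') →
    Acc (fun v t => r1 v t ∨ r2 v t) u := by
  induction hu with
  | intro u _ ih =>
    intro h1
    refine Acc.intro u (fun v hv => ?_)
    rcases hv with hv | hv
    · exact h1 v hv
    · refine ih v hv (fun v' hv' => ?_)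
      obtain ⟨t', ht', hvt'⟩ := comm hv hv'
      exact (h1 t' ht').inv (Or.inr hvt')

theorem acc_union {α : Sort*} {r1 r2 : α → α → Prop}
    (comm : ∀ {t v v'}, r2 v t → r1 v' v → ∃ t', r1 t' t ∧ r2 v' t')
    (hr2 : ∀ a, Acc r2 a) {t : α} (h : Acc r1 t) :
    Acc (fun v t => r1 v t ∨ r2 v t) t := by
  induction h with
  | intro t _ ih => exact acc_union_aux comm (hr2 t) ih

/-- Every term is accessible for the direct subterm relation. -/
theorem acc_directSub : ∀ t : Term Sig ar, Acc (@DirectSub Sig ar) t := by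
  intro t
  induction t with
  | var x => exact Acc.intro _ (fun v hv => by cases hv)
  | app f ts ih =>
    exact Acc.intro _ (fun v hv => by cases hv with | arg _ _ i => exact ih i)

/-- Rewriting commutes with taking direct subterms. -/
theorem comm_sub_rew : ∀ {t v v' : Term Sig ar},
    DirectSub v t → Rew R v v' → ∃ t', Rew R t t' ∧ DirectSub v' t' := by
  intro t v v' h hr
  cases h with
  | arg f ts i =>
    refine ⟨Term.app f (Function.update ts i v'), ?_, ?_⟩
    · have h2 := Rew.ctx hr f ts i
      rwa [Function.update_eq_self] at h2
    · have h3 := DirectSub.arg f (Function.update ts i v') i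
      rwa [Function.update_self] at h3

/-- The union of (reversed) rewriting and direct subterm. -/
def Stp (R : Set (Term Sig ar × Term Sig ar)) :
    Term Sig ar → Term Sig ar → Prop :=
  fun v t => Rew R t v ∨ DirectSub v t

theorem csub_transGen {a b : Term Sig ar} (h : CSub isCon a b) :
    Relation.TransGen (@DirectSub Sig ar) a b := by
  induction h with
  | arg c _ ts i => exact Relation.TransGen.single (DirectSub.arg c ts i)
  | trans h1 h2 ih1 ih2 => exact ih1.trans ih2

theorem red_append {α : Type*} {r S : α → α → Prop}
    (hrS : ∀ {a b}, r a b → S b a) :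
    ∀ {t w : α}, Relation.ReflTransGen r t w →
      ∀ {v}, Relation.TransGen S v w → Relation.TransGen S v t := by
  intro t w h
  induction h with
  | refl => exact fun hv => hv
  | tail h1 h2 ih => intro v hv; exact ih (hv.tail (hrS h2))

theorem dec_subrel {v t : Term Sig ar} (h : DecR isCon R v t) :
    Relation.TransGen (Stp R) v t := by
  obtain ⟨w, hred, hcs⟩ := h
  have h1 : Relation.TransGen (Stp R) v w :=
    Relation.TransGen.mono (fun a b (hab : DirectSub a b) => (Or.inr hab : Stp R a b)) v w (csub_transGen hcs)
  exact red_append (fun hr => Or.inl hr) hred h1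

/-- Strongly normalizing terms are accessible for the decrease relation. -/
theorem acc_decR {t : Term Sig ar} (h : Acc (fun a b => Rew R b a) t) :
    Acc (DecR isCon R) t := by
  have h1 : Acc (Stp R) t :=
    acc_union (fun h2 h1 => comm_sub_rew h2 h1) acc_directSub h
  exact Subrelation.accessible (fun h => dec_subrel h) h1.transGen

/-- Concrete abstraction property of a matrix w.r.t. the decrease and
reduction relations. -/
def AbR (isCon : Sig → Prop) (R : Set (Term Sig ar × Term Sig ar))
    (m n : ℕ) (A : ℕ → ℕ → SC)
    (s : Fin m → Term Sig ar) (t : Fin n → Term Sig ar) : Prop :=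
  ∀ (i : Fin m) (j : Fin n),
    (A i j = SC.minusOne → DecR isCon R (t j) (s i)) ∧
    (A i j = SC.zero → Relation.ReflTransGen (Rew R) (s i) (t j))

theorem ab_comp {m n p : ℕ} {A B : ℕ → ℕ → SC}
    {s : Fin m → Term Sig ar} {t : Fin n → Term Sig ar} {u : Fin p → Term Sig ar}
    (h1 : AbR isCon R m n A s t) (h2 : AbR isCon R n p B t u) :
    AbR isCon R m p (matProd n A B) s u := by
  intro i k
  constructor
  · intro h
    obtain ⟨j, hj, hc⟩ := matProd_minusOne h
    have H1 := h1 i ⟨j, hj⟩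
    have H2 := h2 ⟨j, hj⟩ k
    cases hA : A i j <;> cases hB : B j k <;> rw [hA, hB] at hc
    · exact dec_dec (H1.1 hA) (H2.1 hB)
    · exact dec_red (H1.1 hA) (H2.2 hB)
    · exact absurd hc (by decide)
    · exact red_dec (H1.2 hA) (H2.1 hB)
    · exact absurd hc (by decide)
    · exact absurd hc (by decide)
    · exact absurd hc (by decide)
    · exact absurd hc (by decide)
    · exact absurd hc (by decide)
  · intro h
    obtain ⟨j, hj, hc⟩ := matProd_zero h
    have H1 := h1 i ⟨j, hj⟩
    have H2 := h2 ⟨j, hj⟩ k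
    cases hA : A i j <;> cases hB : B j k <;> rw [hA, hB] at hc
    · exact absurd hc (by decide)
    · exact absurd hc (by decide)
    · exact absurd hc (by decide)
    · exact absurd hc (by decide)
    · exact (H1.2 hA).trans (H2.2 hB)
    · exact absurd hc (by decide)
    · exact absurd hc (by decide)
    · exact absurd hc (by decide)
    · exact absurd hc (by decide)

/-- From an instantiated call, extract a call-graph edge together with the
abstraction property of its matrix. -/
theorem icall_data {x y : (f : Sig) × (Fin (ar f) → Term Sig ar)}
    (h : ICall ar isCon R x y) :
    ∃ A, (⟨x.1, y.1, A⟩ : Edge Sig) ∈ CallGraph ar isCon R ∧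
      AbR isCon R (ar x.1) (ar y.1) A x.2 y.2 ∧ ¬ isCon y.1 := by
  classical
  obtain ⟨ps, us, r, γ, hrule, hcon, hsub, hsn, hred, hv⟩ := h
  refine ⟨fun i j =>
      if hij : i < ar x.1 ∧ j < ar y.1 then
        if CSub isCon (us ⟨j, hij.2⟩) (ps ⟨i, hij.1⟩) then SC.minusOne
        else if us ⟨j, hij.2⟩ = ps ⟨i, hij.1⟩ then SC.zero else SC.infty
      else SC.infty, ?_, ?_, hcon⟩
  · refine ⟨ps, us, r, hrule, hcon, hsub, ?_⟩
    intro i j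
    have hij : (i : ℕ) < ar x.1 ∧ (j : ℕ) < ar y.1 := ⟨i.2, j.2⟩
    refine ⟨fun hcs => ?_, fun hn he => ?_, fun hn hne => ?_⟩ <;>
      simp only [dif_pos hij, Fin.eta]
    · rw [if_pos hcs]
    · rw [if_neg hn, if_pos he]
    · rw [if_neg hn, if_neg hne]
  · intro i j
    have hij : (i : ℕ) < ar x.1 ∧ (j : ℕ) < ar y.1 := ⟨i.2, j.2⟩
    constructor
    · intro hA
      simp only [dif_pos hij, Fin.eta] at hA
      by_cases hcs : CSub isCon (us j) (ps i)
      · exact ⟨subst γ (ps i), hred i, by rw [hv j]; exact csub_subst hcs⟩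
      · rw [if_neg hcs] at hA
        by_cases he : us j = ps i
        · rw [if_pos he] at hA; cases hA
        · rw [if_neg he] at hA; cases hA
    · intro hA
      simp only [dif_pos hij, Fin.eta] at hA
      by_cases hcs : CSub isCon (us j) (ps i)
      · rw [if_pos hcs] at hA; cases hA
      · rw [if_neg hcs] at hA
        by_cases he : us j = ps i
        · rw [hv j, he]; exact hred i
        · rw [if_neg he] at hA; cases hA

/-- There is no infinite descending sequence from an accessible element. -/
theorem acc_no_descend {α : Sort*} {r : α → α → Prop} {a : α} (h : Acc r a) :
    ∀ g : ℕ → α, g 0 = a → (∀ n, r (g (n + 1)) (g n)) → False := by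
  induction h with
  | intro a _ ih =>
    intro g hg hstep
    exact ih (g 1) (hg ▸ hstep 0) (fun n => g (n + 1)) rfl (fun n => hstep (n + 1))

/-- From a non-well-founded relation, extract an infinite descending
sequence. -/
theorem not_wf_seq {α : Type*} {r : α → α → Prop} (h : ¬ WellFounded r) :
    ∃ g : ℕ → α, ∀ n, r (g (n + 1)) (g n) := by
  classical
  have hex : ∃ a, ¬ Acc r a := by
    by_contra h'
    push_neg at h'
    exact h ⟨h'⟩
  obtain ⟨a, ha⟩ := hex
  have step : ∀ b : {x // ¬ Acc r x}, ∃ c : {x // ¬ Acc r x}, r c.1 b.1 := by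
    intro b
    by_contra hb
    push_neg at hb
    exact b.2 (Acc.intro b.1 (fun y hy =>
      by_contra (fun hy' => hb ⟨y, hy'⟩ hy)))
  let g : ℕ → {x // ¬ Acc r x} := fun n =>
    Nat.rec (motive := fun _ => {x // ¬ Acc r x}) ⟨a, ha⟩
      (fun _ b => (step b).choose) n
  exact ⟨fun n => (g n).1, fun n => (step (g n)).choose_spec⟩

/-- Infinite "Ramsey-lite": for any coloring of pairs of naturals with
finitely many colors, there is an infinite subsequence all of whose
consecutive pairs get the same color. -/
theorem ramsey_consec {C : Type*} [Finite C] (χ : ℕ → ℕ → C) :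
    ∃ s : ℕ → ℕ, StrictMono s ∧ ∃ c, ∀ k, χ (s k) (s (k + 1)) = c := by
  classical
  have pigeon : ∀ (X : Set ℕ), X.Infinite → ∀ x : ℕ,
      ∃ c, {y | y ∈ X ∧ x < y ∧ χ x y = c}.Infinite := by
    intro X hX x
    by_contra hcon
    push_neg at hcon
    have hsub : {y | y ∈ X ∧ x < y} ⊆
        ⋃ c ∈ (Set.univ : Set C), {y | y ∈ X ∧ x < y ∧ χ x y = c} := by
      intro y hy
      exact Set.mem_biUnion (Set.mem_univ (χ x y)) ⟨hy.1, hy.2, rfl⟩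
    have hfin2 : {y | y ∈ X ∧ x < y}.Finite :=
      (Set.Finite.biUnion Set.finite_univ (fun c _ => hcon c)).subset hsub
    have heq : {y | y ∈ X ∧ x < y} = X \ Set.Iic x := by
      ext y
      simp [Set.mem_Iic, not_le]
    rw [heq] at hfin2
    exact hX.diff (Set.finite_Iic x) hfin2
  let T := {X : Set ℕ // X.Infinite}
  let elt : T → ℕ := fun st => st.2.nonempty.choose
  let nc : T → C := fun st => (pigeon st.1 st.2 (elt st)).choose
  let nxt : T → T := fun st =>
    ⟨{y | y ∈ st.1 ∧ elt st < y ∧ χ (elt st) y = nc st},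
      (pigeon st.1 st.2 (elt st)).choose_spec⟩
  let St : ℕ → T := fun n => nxt^[n] ⟨Set.univ, Set.infinite_univ⟩
  have hSt : ∀ n, St (n + 1) = nxt (St n) := fun n =>
    Function.iterate_succ_apply' nxt n _
  let a : ℕ → ℕ := fun n => elt (St n)
  let cl : ℕ → C := fun n => nc (St n)
  have hmem : ∀ n, a n ∈ (St n).1 := fun n => (St n).2.nonempty.choose_spec
  have hsub : ∀ n, (St (n + 1)).1 ⊆
      {y | y ∈ (St n).1 ∧ a n < y ∧ χ (a n) y = cl n} := by
    intro n y hy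
    rw [hSt n] at hy
    exact hy
  have hmono : ∀ n k, (St (n + k)).1 ⊆ (St n).1 := by
    intro n k
    induction k with
    | zero => exact fun y hy => hy
    | succ k ih => exact fun y hy => ih ((hsub (n + k)) hy).1
  have hmono' : ∀ n m, n ≤ m → (St m).1 ⊆ (St n).1 := by
    intro n m hnm
    have e : m = n + (m - n) := by omega
    rw [e]
    exact hmono n (m - n)
  have hkey : ∀ k l, k < l → a k < a l ∧ χ (a k) (a l) = cl k := by
    intro k l hkl
    have h3 : a l ∈ {y | y ∈ (St k).1 ∧ a k < y ∧ χ (a k) y = cl k} :=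
      hsub k (hmono' (k + 1) l hkl (hmem l))
    exact ⟨h3.2.1, h3.2.2⟩
  obtain ⟨c, hc⟩ := Finite.exists_infinite_fiber cl
  have hI : (cl ⁻¹' {c}).Infinite := Set.infinite_coe_iff.mp hc
  let t : ℕ → {m // m ∈ cl ⁻¹' {c}} := fun k =>
    Nat.rec (motive := fun _ => {m // m ∈ cl ⁻¹' {c}})
      ⟨hI.nonempty.choose, hI.nonempty.choose_spec⟩
      (fun _ p => ⟨(hI.exists_gt p.1).choose, (hI.exists_gt p.1).choose_spec.1⟩) k
  have ht : ∀ k, (t k).1 < (t (k + 1)).1 := fun k =>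
    (hI.exists_gt (t k).1).choose_spec.2
  refine ⟨fun k => a (t k).1,
    strictMono_nat_of_lt_succ (fun k => (hkey _ _ (ht k)).1), c, fun k => ?_⟩
  rw [(hkey _ _ (ht k)).2]
  exact (t k).2

end Aux

/-- If a first-order constructor rewrite system `R` (finitely many defined
symbols, left-hand sides of the form `f p̄` with `f` defined and `p̄` patterns)
satisfies the size-change termination principle — every matrix labeling an
edge from a node to itself in the transitive closure of its call graph has a
`−1` on its diagonal — then the instantiated call relation `⋗` is
well-founded. -/
theorem sct_implies_icall_wellFounded {Sig : Type} (ar : Sig → ℕ)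
    (isCon : Sig → Prop) (hfin : {f : Sig | ¬ isCon f}.Finite)
    (R : Set (Term Sig ar × Term Sig ar))
    (hR : ∀ l r, (l, r) ∈ R → ∃ (f : Sig) (ps : Fin (ar f) → Term Sig ar),
        ¬ isCon f ∧ l = Term.app f ps ∧ ∀ i, Pattern isCon (ps i))
    (hsct : ∀ (f : Sig) (M : ℕ → ℕ → SC),
        Closure ar (CallGraph ar isCon R) f f M → ∃ i < ar f, M i i = SC.minusOne) :
    WellFounded (fun y x => ICall ar isCon R x y) := by
  classical
  by_contra hwf
  obtain ⟨c0, hc0⟩ := not_wf_seq hwf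
  -- hc0 n : ICall (c0 n) (c0 (n+1)); shift by one so every symbol is defined
  let c : ℕ → ((f : Sig) × (Fin (ar f) → Term Sig ar)) := fun n => c0 (n + 1)
  have hstep : ∀ n, ICall ar isCon R (c n) (c (n + 1)) := fun n => hc0 (n + 1)
  have hdef : ∀ n, ¬ isCon (c n).1 := by
    intro n
    obtain ⟨_, _, _, _, _, hcon, _, _, _, _⟩ := hc0 n
    exact hcon
  have hdat : ∀ n, ∃ A, (⟨(c n).1, (c (n + 1)).1, A⟩ : Edge Sig) ∈
        CallGraph ar isCon R ∧
      AbR isCon R (ar (c n).1) (ar (c (n + 1)).1) A (c n).2 (c (n + 1)).2 ∧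
      ¬ isCon (c (n + 1)).1 :=
    fun n => icall_data (hstep n)
  choose A hA1 hA2 _ using hdat
  -- products of consecutive call matrices
  let P : ℕ → ℕ → ℕ → ℕ → SC := fun k =>
    Nat.rec (motive := fun _ => ℕ → ℕ → ℕ → SC) (fun n => A n)
      (fun k Pk n => matProd (ar (c (n + 1)).1) (A n) (Pk (n + 1))) k
  have hPcl : ∀ k n, Closure ar (CallGraph ar isCon R) (c n).1
      (c (n + k + 1)).1 (P k n) := by
    intro k
    induction k with
    | zero => intro n; exact Closure.base (hA1 n)
    | succ k ih =>
      intro n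
      have h3 := Closure.step (hA1 n) (ih (n + 1))
      have he : n + 1 + k + 1 = n + (k + 1) + 1 := by omega
      rw [he] at h3
      exact h3
  have hPab : ∀ k n, AbR isCon R (ar (c n).1) (ar (c (n + k + 1)).1) (P k n)
      (c n).2 (c (n + k + 1)).2 := by
    intro k
    induction k with
    | zero => intro n; exact hA2 n
    | succ k ih =>
      intro n
      have h3 := ab_comp (hA2 n) (ih (n + 1))
      have he : n + 1 + k + 1 = n + (k + 1) + 1 := by omega
      rw [he] at h3
      exact h3
  have hPcl' : ∀ n m, n < m → Closure ar (CallGraph ar isCon R) (c n).1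
      (c m).1 (P (m - n - 1) n) := by
    intro n m hnm
    have he : n + (m - n - 1) + 1 = m := by omega
    have h := hPcl (m - n - 1) n
    rwa [he] at h
  have hPab' : ∀ n m, n < m → AbR isCon R (ar (c n).1) (ar (c m).1)
      (P (m - n - 1) n) (c n).2 (c m).2 := by
    intro n m hnm
    have he : n + (m - n - 1) + 1 = m := by omega
    have h := hPab (m - n - 1) n
    rwa [he] at h
  -- a uniform bound on arities of defined symbols
  obtain ⟨N, hN⟩ := (hfin.image ar).bddAbove
  have hNle : ∀ f, ¬ isCon f → ar f ≤ N := fun f hf => hN ⟨f, hf, rfl⟩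
  -- coloring of pairs
  haveI : Finite ↥{f : Sig | ¬ isCon f} := hfin.to_subtype
  let D := ↥{f : Sig | ¬ isCon f}
  let χ : ℕ → ℕ → (D × D × (Fin (N + 1) → Fin (N + 1) → SC)) := fun n m =>
    (⟨(c n).1, hdef n⟩, ⟨(c m).1, hdef m⟩, fun i j => P (m - n - 1) n i j)
  obtain ⟨s, hsmono, col, hcol⟩ := ramsey_consec χ
  have hsym : ∀ k, (c (s k)).1 = col.1.1 := fun k =>
    congrArg (fun x => x.1.1) (hcol k)
  have hmat : ∀ k, (fun (i j : Fin (N + 1)) =>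
      P (s (k + 1) - s k - 1) (s k) i j) = col.2.2 := fun k =>
    congrArg (fun x => x.2.2) (hcol k)
  -- apply the size-change termination hypothesis
  have hcl01 := hPcl' (s 0) (s 1) (hsmono Nat.zero_lt_one)
  rw [hsym 0, hsym 1] at hcl01
  obtain ⟨i, hi, hMi⟩ := hsct col.1.1 _ hcl01
  have hcon0 : ¬ isCon col.1.1 := col.1.2
  have hiN : i < N + 1 := by have := hNle _ hcon0; omega
  have hPkii : ∀ k, P (s (k + 1) - s k - 1) (s k) i i = SC.minusOne := by
    intro k
    have e1 : P (s (k + 1) - s k - 1) (s k) i i =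
        col.2.2 ⟨i, hiN⟩ ⟨i, hiN⟩ :=
      congrFun (congrFun (hmat k) ⟨i, hiN⟩) ⟨i, hiN⟩
    have e0 : P (s 1 - s 0 - 1) (s 0) i i = col.2.2 ⟨i, hiN⟩ ⟨i, hiN⟩ :=
      congrFun (congrFun (hmat 0) ⟨i, hiN⟩) ⟨i, hiN⟩
    rw [e1, ← e0]
    exact hMi
  -- the infinite decreasing sequence of terms
  have hark : ∀ k, i < ar (c (s k)).1 := fun k => by rw [hsym k]; exact hi
  let u : ℕ → Term Sig ar := fun k => (c (s k)).2 ⟨i, hark k⟩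
  have hdesc : ∀ k, DecR isCon R (u (k + 1)) (u k) := by
    intro k
    have hab := hPab' (s k) (s (k + 1)) (hsmono (Nat.lt_succ_self k))
    exact (hab ⟨i, hark k⟩ ⟨i, hark (k + 1)⟩).1 (hPkii k)
  obtain ⟨_, _, _, _, _, _, _, hsn, _, _⟩ := hstep (s 0)
  exact acc_no_descend (acc_decR (hsn ⟨i, hark 0⟩)) u rfl hdesc
end

section
/- Consider the signature with symbols 0 (arity 0), S (arity 1), P (arity 1), aux (arity 1) and returnZero (arity 1), and the rewrite system consisting of the six rules: S (P x) → x; P (S x) → x; returnZero x → aux x; aux 0 → 0; aux (S x) → returnZero x; aux (P x) → returnZero x. The rewrite relation generated by these rules (the closure of the rules under substitutions and under contexts) is strongly normalizing: there is no infinite rewrite sequence starting from any term. -/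
/-- The signature with symbols `0`, `S`, `P`, `aux` and `returnZero`. -/
inductive Sym8 : Type
  | zero
  | S
  | P
  | aux
  | returnZero
  deriving DecidableEq

/-- Arities: `0` has arity 0, all other symbols have arity 1. -/
def ar8 : Sym8 → ℕ
  | .zero => 0
  | _ => 1

abbrev Term8 := Term Sym8 ar8

/-- The six rules: `S (P x) → x`; `P (S x) → x`; `returnZero x → aux x`;
`aux 0 → 0`; `aux (S x) → returnZero x`; `aux (P x) → returnZero x`. -/
def R8 : Set (Term8 × Term8) :=
  { (Term.app Sym8.S fun _ => Term.app Sym8.P fun _ => Term.var 0, Term.var 0),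
    (Term.app Sym8.P fun _ => Term.app Sym8.S fun _ => Term.var 0, Term.var 0),
    (Term.app Sym8.returnZero fun _ => Term.var 0,
      Term.app Sym8.aux fun _ => Term.var 0),
    (Term.app Sym8.aux fun _ => Term.app Sym8.zero Fin.elim0,
      Term.app Sym8.zero Fin.elim0),
    (Term.app Sym8.aux fun _ => Term.app Sym8.S fun _ => Term.var 0,
      Term.app Sym8.returnZero fun _ => Term.var 0),
    (Term.app Sym8.aux fun _ => Term.app Sym8.P fun _ => Term.var 0,
      Term.app Sym8.returnZero fun _ => Term.var 0) }


/-- Polynomial interpretation measure. -/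
def m8 : Term8 → ℕ
  | .var _ => 0
  | .app .zero _ => 0
  | .app .S ts => m8 (ts ⟨0, Nat.one_pos⟩) + 1
  | .app .P ts => m8 (ts ⟨0, Nat.one_pos⟩) + 1
  | .app .aux ts => 2 * m8 (ts ⟨0, Nat.one_pos⟩) + 1
  | .app .returnZero ts => 2 * m8 (ts ⟨0, Nat.one_pos⟩) + 2

theorem m8_decreases {t t' : Term8} (h : Rew R8 t t') : m8 t' < m8 t := by
  induction h with
  | rule h γ =>
    simp only [R8, Set.mem_insert_iff, Set.mem_singleton_iff, Prod.mk.injEq] at h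
    rcases h with ⟨hl, hr⟩ | ⟨hl, hr⟩ | ⟨hl, hr⟩ | ⟨hl, hr⟩ | ⟨hl, hr⟩ | ⟨hl, hr⟩ <;>
      subst hl <;> subst hr <;> simp [subst, m8] <;> omega
  | ctx h f ts i ih =>
    cases f with
    | zero => exact i.elim0
    | _ =>
      obtain ⟨iv, hlt⟩ := i
      have hiv : iv = 0 := by
        have : iv < 1 := hlt
        omega
      subst hiv
      simp [m8, Function.update]
      omega

/-- The rewrite relation generated by the six rules is strongly normalizing:
every term is accessible for the inverse of the rewrite relation, i.e. there
is no infinite rewrite sequence starting from any term. -/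
theorem R8_strongly_normalizing :
    WellFounded (fun t s : Term8 => Rew R8 s t) :=
  Subrelation.wf (fun h => m8_decreases h) (InvImage.wf m8 Nat.lt_wfRel.wf)
end
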